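/- Let G be a loopless multigraph on a finite vertex set, let t ≥ 0 be an integer, and let H be the t-core of G. If corefan(H) ≤ t, then Fan(G) ≤ Δ(G) + t. -/

import Mathlib

structure Multigraph (V : Type*) where
  mu : V → V → ℕ
  symm : ∀ u v, mu u v = mu v u
  loopless : ∀ v, mu v v = 0

namespace Multigraph

variable {V : Type*} [Fintype V]

/-- The degree of a vertex: number of incident edges. -/
def deg (G : Multigraph V) (v : V) : ℕ := ∑ u, G.mu v u

/-- The maximum degree Δ(G). -/
def maxDeg (G : Multigraph V) : ℕ := Finset.univ.sup (deg G)

/-- The local multiplicity μ_G(v). -/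
def locMult (G : Multigraph V) (v : V) : ℕ := Finset.univ.sup (G.mu v)

end Multigraph

namespace Multigraph

variable {V : Type*} [Fintype V]

/-- The t-core of G : induced submultigraph on the vertices v with
d_G(v) + μ_G(v) > Δ(G) + t. -/
def tCore (G : Multigraph V) (t : ℕ) : Multigraph V where
  mu u v := if (maxDeg G + t < deg G u + locMult G u) ∧
               (maxDeg G + t < deg G v + locMult G v) then G.mu u v else 0
  symm u v := by
    by_cases h : (maxDeg G + t < deg G u + locMult G u) ∧
        (maxDeg G + t < deg G v + locMult G v)
    · rw [if_pos h, if_pos ⟨h.2, h.1⟩, G.symm]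
    · rw [if_neg h, if_neg fun h' => h ⟨h'.2, h'.1⟩]
  loopless v := by
    split <;> simp [G.loopless]

end Multigraph

namespace Multigraph

variable {V : Type*} [Fintype V]

/-- K is a subgraph of H (same vertex set, smaller multiplicities). -/
def IsSubgraph (K H : Multigraph V) : Prop := ∀ u v, K.mu u v ≤ H.mu u v

/-- K has at least one edge. -/
def HasEdge (K : Multigraph V) : Prop := ∃ u v, 1 ≤ K.mu u v

/-- The cfan degree cdeg_{H,K}(x,y): least l such that
∑_{z∈Z}(d_K(z) − d_H(z) + μ_K(x,z) − l) ≤ 1 for every Z ⊆ N_K(x) with y ∈ Z. -/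
noncomputable def cdeg (H K : Multigraph V) (x y : V) : ℕ :=
  sInf { l : ℕ | ∀ Z : Finset V, (∀ z ∈ Z, 1 ≤ K.mu x z) → y ∈ Z →
    ∑ z ∈ Z, ((K.deg z : ℤ) - (H.deg z : ℤ) + (K.mu x z : ℤ) - (l : ℤ)) ≤ 1 }

/-- The cfan number corefan(H): max over nonempty subgraphs K of H of the min of
cdeg_{H,K}(x,y) over edges xy of K (0 if H is edgeless). -/
noncomputable def corefan (H : Multigraph V) : ℕ :=
  sSup { n | ∃ K : Multigraph V, IsSubgraph K H ∧ HasEdge K ∧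
    n = sInf { m | ∃ x y, 1 ≤ K.mu x y ∧ m = cdeg H K x y } }

end Multigraph

namespace Multigraph

variable {V : Type*} [Fintype V]

/-- The fan degree deg_J(x,y): least k satisfying condition (i) or (ii). -/
noncomputable def fanDeg (J : Multigraph V) (x y : V) : ℕ :=
  sInf { k : ℕ | ((J.deg x : ℤ) + (J.deg y : ℤ) - (J.mu x y : ℤ) ≤ (k : ℤ)) ∨
    (∀ Z : Finset V, (∀ z ∈ Z, 1 ≤ J.mu x z) → y ∈ Z → 2 ≤ Z.card →
      ∑ z ∈ Z, ((J.deg z : ℤ) + (J.mu x z : ℤ) - (k : ℤ)) ≤ 1) }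

/-- The fan number fan(G): max over nonempty subgraphs J of G of the min of
deg_J(x,y) over edges xy of J (0 if G is edgeless). -/
noncomputable def fanNum (G : Multigraph V) : ℕ :=
  sSup { n | ∃ J : Multigraph V, IsSubgraph J G ∧ HasEdge J ∧
    n = sInf { m | ∃ x y, 1 ≤ J.mu x y ∧ m = fanDeg J x y } }

/-- Fan(G) = max(Δ(G), fan(G)). -/
noncomputable def bigFan (G : Multigraph V) : ℕ := max (maxDeg G) (fanNum G)

end Multigraph

namespace Multigraph

variable {V : Type*} [Fintype V]

lemma mu_le_locMult (G : Multigraph V) (u v : V) : G.mu u v ≤ G.locMult u :=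
  Finset.le_sup (Finset.mem_univ v)

lemma mu_le_deg (G : Multigraph V) (u v : V) : G.mu u v ≤ G.deg u :=
  Finset.single_le_sum (fun _ _ => Nat.zero_le _) (Finset.mem_univ v)

lemma deg_le_maxDeg (G : Multigraph V) (v : V) : G.deg v ≤ G.maxDeg :=
  Finset.le_sup (Finset.mem_univ v)

lemma deg_mono {J G : Multigraph V} (h : IsSubgraph J G) (v : V) : J.deg v ≤ G.deg v :=
  Finset.sum_le_sum fun u _ => h v u

/-- The restriction of `J` to the vertices of the `t`-core of `G`. -/
def restrictJ (J G : Multigraph V) (t : ℕ) : Multigraph V where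
  mu u v := if (maxDeg G + t < deg G u + locMult G u) ∧
               (maxDeg G + t < deg G v + locMult G v) then J.mu u v else 0
  symm u v := by
    by_cases h : (maxDeg G + t < deg G u + locMult G u) ∧
        (maxDeg G + t < deg G v + locMult G v)
    · rw [if_pos h, if_pos ⟨h.2, h.1⟩, J.symm]
    · rw [if_neg h, if_neg fun h' => h ⟨h'.2, h'.1⟩]
  loopless v := by
    split <;> simp [J.loopless]

lemma restrictJ_mu (J G : Multigraph V) (t : ℕ) (u v : V) :
    (restrictJ J G t).mu u v = if (maxDeg G + t < deg G u + locMult G u) ∧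
      (maxDeg G + t < deg G v + locMult G v) then J.mu u v else 0 := rfl

lemma tCore_mu (G : Multigraph V) (t : ℕ) (u v : V) :
    (G.tCore t).mu u v = if (maxDeg G + t < deg G u + locMult G u) ∧
      (maxDeg G + t < deg G v + locMult G v) then G.mu u v else 0 := rfl

lemma restrictJ_isSubgraph {J G : Multigraph V} (hJ : IsSubgraph J G) (t : ℕ) :
    IsSubgraph (restrictJ J G t) (G.tCore t) := by
  intro u v
  rw [restrictJ_mu, tCore_mu]
  split
  · exact hJ u v
  · exact le_rfl

lemma restrictJ_pos {J G : Multigraph V} {t : ℕ} {u v : V}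
    (h : 1 ≤ (restrictJ J G t).mu u v) :
    (maxDeg G + t < deg G u + locMult G u) ∧
      (maxDeg G + t < deg G v + locMult G v) ∧ 1 ≤ J.mu u v := by
  rw [restrictJ_mu] at h
  split at h
  · exact ⟨‹_ ∧ _›.1, ‹_ ∧ _›.2, h⟩
  · omega

/-- Key pointwise degree comparison on core vertices. -/
lemma core_deg_bound {J G : Multigraph V} (t : ℕ) (hJ : IsSubgraph J G) {z : V}
    (hz : maxDeg G + t < deg G z + locMult G z) :
    J.deg z + (G.tCore t).deg z ≤ G.deg z + (restrictJ J G t).deg z := by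
  unfold deg
  rw [← Finset.sum_add_distrib, ← Finset.sum_add_distrib]
  apply Finset.sum_le_sum
  intro u _
  rw [restrictJ_mu, tCore_mu]
  by_cases hu : maxDeg G + t < deg G u + locMult G u
  · rw [if_pos ⟨hz, hu⟩, if_pos ⟨hz, hu⟩]
    omega
  · rw [if_neg fun h' => hu h'.2, if_neg fun h' => hu h'.2]
    have := hJ z u
    omega

lemma maxDeg_mem_cdegSet {H K : Multigraph V} (hK : IsSubgraph K H) (x y : V) :
    maxDeg H ∈ { l : ℕ | ∀ Z : Finset V, (∀ z ∈ Z, 1 ≤ K.mu x z) → y ∈ Z →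
      ∑ z ∈ Z, ((K.deg z : ℤ) - (H.deg z : ℤ) + (K.mu x z : ℤ) - (l : ℤ)) ≤ 1 } := by
  intro Z _ _
  have h0 : ∑ z ∈ Z, ((K.deg z : ℤ) - (H.deg z : ℤ) + (K.mu x z : ℤ) - (maxDeg H : ℤ)) ≤ 0 := by
    apply Finset.sum_nonpos
    intro z _
    have h1 : K.deg z ≤ H.deg z := deg_mono hK z
    have h2 : K.mu x z ≤ maxDeg H := by
      calc K.mu x z = K.mu z x := K.symm x z
        _ ≤ K.deg z := mu_le_deg K z x
        _ ≤ H.deg z := deg_mono hK z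
        _ ≤ maxDeg H := deg_le_maxDeg H z
    omega
  exact h0.trans zero_le_one

lemma cdeg_le_maxDeg {H K : Multigraph V} (hK : IsSubgraph K H) (x y : V) :
    cdeg H K x y ≤ maxDeg H :=
  Nat.sInf_le (maxDeg_mem_cdegSet hK x y)

lemma cdeg_spec {H K : Multigraph V} (hK : IsSubgraph K H) {x y : V} {l : ℕ}
    (h : cdeg H K x y ≤ l) :
    ∀ Z : Finset V, (∀ z ∈ Z, 1 ≤ K.mu x z) → y ∈ Z →
      ∑ z ∈ Z, ((K.deg z : ℤ) - (H.deg z : ℤ) + (K.mu x z : ℤ) - (l : ℤ)) ≤ 1 := by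
  have hne : { l : ℕ | ∀ Z : Finset V, (∀ z ∈ Z, 1 ≤ K.mu x z) → y ∈ Z →
      ∑ z ∈ Z, ((K.deg z : ℤ) - (H.deg z : ℤ) + (K.mu x z : ℤ) - (l : ℤ)) ≤ 1 }.Nonempty :=
    ⟨maxDeg H, maxDeg_mem_cdegSet hK x y⟩
  have hmem := Nat.sInf_mem hne
  intro Z hZ hy
  refine le_trans (Finset.sum_le_sum fun z _ => ?_) (hmem Z hZ hy)
  have h' : sInf { l : ℕ | ∀ Z : Finset V, (∀ z ∈ Z, 1 ≤ K.mu x z) → y ∈ Z →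
      ∑ z ∈ Z, ((K.deg z : ℤ) - (H.deg z : ℤ) + (K.mu x z : ℤ) - (l : ℤ)) ≤ 1 } ≤ l := h
  omega

lemma corefan_bddAbove (H : Multigraph V) :
    ∀ n ∈ { n | ∃ K : Multigraph V, IsSubgraph K H ∧ HasEdge K ∧
      n = sInf { m | ∃ x y, 1 ≤ K.mu x y ∧ m = cdeg H K x y } }, n ≤ maxDeg H := by
  rintro n ⟨K, hK, ⟨a, b, hab⟩, rfl⟩
  calc sInf { m | ∃ x y, 1 ≤ K.mu x y ∧ m = cdeg H K x y }
      ≤ cdeg H K a b := Nat.sInf_le ⟨a, b, hab, rfl⟩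
    _ ≤ maxDeg H := cdeg_le_maxDeg hK a b

end Multigraph

/-- Theorem: if the t-core H of G satisfies corefan(H) ≤ t, then Fan(G) ≤ Δ(G) + t. -/
theorem stmt2 {V : Type*} [Fintype V] (G : Multigraph V) (t : ℕ)
    (H : Multigraph V) (hH : H = G.tCore t)
    (h : H.corefan ≤ t) :
    G.bigFan ≤ G.maxDeg + t := by
  classical
  subst hH
  rw [Multigraph.bigFan]
  refine max_le (Nat.le_add_right _ _) ?_
  rw [Multigraph.fanNum]
  apply csSup_le'
  rintro n ⟨J, hJG, ⟨a, b, hab⟩, rfl⟩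
  suffices hex : ∃ x y, 1 ≤ J.mu x y ∧ J.fanDeg x y ≤ G.maxDeg + t by
    obtain ⟨x, y, hxy, hfd⟩ := hex
    exact le_trans (Nat.sInf_le ⟨x, y, hxy, rfl⟩) hfd
  set H := G.tCore t with hHdef
  set K := Multigraph.restrictJ J G t with hKdef
  by_cases hKE : K.HasEdge
  · -- Case A: the restriction of J to the core has an edge.
    have hKH : K.IsSubgraph H := Multigraph.restrictJ_isSubgraph hJG t
    obtain ⟨a', b', ha'b'⟩ := hKE
    have hne : { m | ∃ x y, 1 ≤ K.mu x y ∧ m = Multigraph.cdeg H K x y }.Nonempty :=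
      ⟨Multigraph.cdeg H K a' b', a', b', ha'b', rfl⟩
    have hle : sInf { m | ∃ x y, 1 ≤ K.mu x y ∧ m = Multigraph.cdeg H K x y } ≤ t := by
      refine le_trans (le_trans (le_csSup ?_ ?_) le_rfl) h
      · exact ⟨H.maxDeg, fun n hn => Multigraph.corefan_bddAbove H n hn⟩
      · exact ⟨K, hKH, ⟨a', b', ha'b'⟩, rfl⟩
    obtain ⟨x, y, hKxy, heq⟩ := Nat.sInf_mem hne
    have hct : Multigraph.cdeg H K x y ≤ t := heq ▸ hle
    obtain ⟨hx, hy, hJxy⟩ := Multigraph.restrictJ_pos hKxy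
    refine ⟨x, y, hJxy, Nat.sInf_le (Or.inr ?_)⟩
    intro Z hZ hyZ _
    have hspec := Multigraph.cdeg_spec hKH hct
    set P : V → Prop := fun z => G.maxDeg + t < G.deg z + G.locMult z with hP
    have hmuK : ∀ z, P z → K.mu x z = J.mu x z := by
      intro z hzc
      rw [hKdef, Multigraph.restrictJ_mu, if_pos ⟨hx, hzc⟩]
    have hsum1 : ∑ z ∈ Z.filter P,
        ((J.deg z : ℤ) + (J.mu x z : ℤ) - ((G.maxDeg + t : ℕ) : ℤ)) ≤ 1 := by
      refine le_trans (Finset.sum_le_sum ?_) (hspec (Z.filter P) ?_ ?_)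
      · intro z hz
        have hzc : P z := (Finset.mem_filter.mp hz).2
        have hmu := hmuK z hzc
        have hdb := Multigraph.core_deg_bound t hJG hzc
        have hdΔ : G.deg z ≤ G.maxDeg := Multigraph.deg_le_maxDeg G z
        rw [← hKdef, ← hHdef] at hdb
        push_cast
        omega
      · intro z hz
        rw [hmuK z (Finset.mem_filter.mp hz).2]
        exact hZ z (Finset.mem_filter.mp hz).1
      · exact Finset.mem_filter.mpr ⟨hyZ, hy⟩
    have hsum2 : ∑ z ∈ Z.filter (fun z => ¬ P z),
        ((J.deg z : ℤ) + (J.mu x z : ℤ) - ((G.maxDeg + t : ℕ) : ℤ)) ≤ 0 := by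
      apply Finset.sum_nonpos
      intro z hz
      have hznc : ¬ P z := (Finset.mem_filter.mp hz).2
      rw [hP] at hznc
      have h1 : J.deg z ≤ G.deg z := Multigraph.deg_mono hJG z
      have h2 : J.mu x z ≤ G.locMult z := by
        calc J.mu x z ≤ G.mu x z := hJG x z
          _ = G.mu z x := G.symm x z
          _ ≤ G.locMult z := Multigraph.mu_le_locMult G z x
      push_cast
      omega
    calc ∑ z ∈ Z, ((J.deg z : ℤ) + (J.mu x z : ℤ) - ((G.maxDeg + t : ℕ) : ℤ))
        = ∑ z ∈ Z.filter P, ((J.deg z : ℤ) + (J.mu x z : ℤ) - ((G.maxDeg + t : ℕ) : ℤ))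
          + ∑ z ∈ Z.filter (fun z => ¬ P z),
            ((J.deg z : ℤ) + (J.mu x z : ℤ) - ((G.maxDeg + t : ℕ) : ℤ)) :=
          (Finset.sum_filter_add_sum_filter_not Z P _).symm
      _ ≤ 1 := by omega
  · -- Case B: the restriction of J to the core is edgeless.
    have hK0 : ∀ u v, K.mu u v = 0 := by
      intro u v
      by_contra h0
      exact hKE ⟨u, v, Nat.one_le_iff_ne_zero.mpr h0⟩
    have key : ∃ x y, 1 ≤ J.mu x y ∧
        ∀ z, 1 ≤ J.mu x z → ¬(G.maxDeg + t < G.deg z + G.locMult z) := by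
      by_cases hc : ∃ c, (G.maxDeg + t < G.deg c + G.locMult c) ∧ ∃ d, 1 ≤ J.mu c d
      · obtain ⟨c, hcc, d, hcd⟩ := hc
        refine ⟨c, d, hcd, fun z hz hzc => ?_⟩
        have h0 := hK0 c z
        rw [hKdef, Multigraph.restrictJ_mu, if_pos ⟨hcc, hzc⟩] at h0
        omega
      · push_neg at hc
        refine ⟨a, b, hab, fun z hz hzc => ?_⟩
        have h1 := hc z hzc a
        have h2 := J.symm z a
        omega
    obtain ⟨x, y, hxy, hall⟩ := key
    refine ⟨x, y, hxy, Nat.sInf_le (Or.inr ?_)⟩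
    intro Z hZ hyZ _
    refine le_trans (Finset.sum_nonpos fun z hz => ?_) zero_le_one
    have h1 : J.deg z ≤ G.deg z := Multigraph.deg_mono hJG z
    have h2 : J.mu x z ≤ G.locMult z := by
      calc J.mu x z ≤ G.mu x z := hJG x z
        _ = G.mu z x := G.symm x z
        _ ≤ G.locMult z := Multigraph.mu_le_locMult G z x
    have h3 := hall z (hZ z hz)
    have h4 : G.deg z ≤ G.maxDeg := Multigraph.deg_le_maxDeg G z
    push_cast
    omega
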